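/- Define W(y) = ∫_{-1/2}^{1/2} dx / (Λ(y-x,x)² + Ω(y-x,x)²) where Λ(k,ℓ) = 4[sin²(πk)+sin²(πℓ)] and Ω(k,ℓ) = 2[sin(2πk)+sin(2πℓ)]. Then there is a constant C such that W(y) ≤ C|y|^{-3/2} for all y ∈ [-1/2, 1/2] \ {0}. -/

import Mathlib

open Real MeasureTheory

noncomputable def Lam (k l : ℝ) : ℝ := 4 * (Real.sin (π * k) ^ 2 + Real.sin (π * l) ^ 2)

noncomputable def Om (k l : ℝ) : ℝ := 2 * (Real.sin (2 * π * k) + Real.sin (2 * π * l))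

lemma aux_cs (a b c d : ℝ) (hc : c^2 ≤ 1) (hd : d^2 ≤ 1) :
    (a*c - d*b)^2 ≤ 2*(a^2+b^2) := by
  nlinarith [sq_nonneg (a*c + d*b), mul_le_mul_of_nonneg_left hc (sq_nonneg a),
    mul_le_mul_of_nonneg_left hd (sq_nonneg b)]

lemma sin_sq_ge {t : ℝ} (h : |t| ≤ 1/2) : 4 * t^2 ≤ Real.sin (π*t)^2 := by
  have hπ := Real.pi_pos
  rcases abs_le.mp h with ⟨h1, h2⟩
  rcases le_or_gt 0 t with ht | ht
  · have h0 : 0 ≤ π * t := by positivity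
    have h1' : π * t ≤ π/2 := by nlinarith
    have := Real.mul_le_sin h0 h1'
    have e : 2/π * (π*t) = 2*t := by field_simp
    rw [e] at this
    nlinarith
  · have h0 : 0 ≤ π * (-t) := by nlinarith
    have h1' : π * (-t) ≤ π/2 := by nlinarith
    have := Real.mul_le_sin h0 h1'
    have e : Real.sin (π * (-t)) = - Real.sin (π*t) := by rw [mul_neg, Real.sin_neg]
    have e2 : 2/π * (π*(-t)) = -(2*t) := by field_simp
    rw [e, e2] at this
    nlinarith

lemma denom_ge {x y : ℝ} (hy : |y| ≤ 1/2) (hx : |x| ≤ 1/2) :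
    x^4 + y^2 ≤ Lam (y - x) x ^ 2 + Om (y - x) x ^ 2 := by
  have hOm : Om (y - x) x = 4 * Real.sin (π*y) * Real.cos (π*(y - 2*x)) := by
    unfold Om
    rw [show 2*π*(y-x) = π*y + π*(y-2*x) by ring,
      show 2*π*x = π*y - π*(y-2*x) by ring, Real.sin_add, Real.sin_sub]
    ring
  have hL : Lam (y-x) x = 4*(Real.sin (π*(y-x))^2 + Real.sin (π*x)^2) := rfl
  have hx2 : 4*x^2 ≤ Real.sin (π*x)^2 := sin_sq_ge hx
  have hy2 : 4*y^2 ≤ Real.sin (π*y)^2 := sin_sq_ge hy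
  have hxb : x^2 ≤ 1/4 := by nlinarith [abs_le.mp hx, abs_nonneg x, sq_abs x]
  have hyb : y^2 ≤ 1/4 := by nlinarith [abs_le.mp hy, abs_nonneg y, sq_abs y]
  have hx40 : (0:ℝ) ≤ x^4 := by positivity
  have hy20 : (0:ℝ) ≤ y^2 := sq_nonneg y
  rcases le_or_gt (1/4) (Real.cos (π*(y - 2*x))^2) with h4 | h4
  · -- |cos| ≥ 1/2 : use Om for y², Lam for x⁴
    have hO2 : 16*y^2 ≤ Om (y - x) x ^2 := by
      have h5 : (4*y^2)*(1/4) ≤ Real.sin (π*y)^2 * Real.cos (π*(y-2*x))^2 :=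
        mul_le_mul hy2 h4 (by norm_num) (sq_nonneg _)
      rw [hOm]; nlinarith
    have hLge : 16*x^2 ≤ Lam (y-x) x := by
      rw [hL]; nlinarith [sq_nonneg (Real.sin (π*(y-x)))]
    have h0L : (0:ℝ) ≤ 16*x^2 := by positivity
    have h6 : (16*x^2)*(16*x^2) ≤ Lam (y-x) x * Lam (y-x) x :=
      mul_le_mul hLge hLge h0L (h0L.trans hLge)
    have h7 : 256*x^4 ≤ Lam (y-x) x ^ 2 := by rw [pow_two]; nlinarith
    linarith
  · -- |cos| < 1/2 : Lam is large
    have hs3 : 3/4 ≤ Real.sin (π*(y-2*x))^2 := by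
      nlinarith [Real.sin_sq_add_cos_sq (π*(y-2*x))]
    have hsub : Real.sin (π*(y-2*x)) =
        Real.sin (π*(y-x)) * Real.cos (π*x) - Real.cos (π*(y-x)) * Real.sin (π*x) := by
      rw [show π*(y-2*x) = π*(y-x) - π*x by ring, Real.sin_sub]
    have hcs : Real.sin (π*(y-2*x))^2 ≤ 2*(Real.sin (π*(y-x))^2 + Real.sin (π*x)^2) := by
      rw [hsub]
      exact aux_cs _ _ _ _ (Real.cos_sq_le_one (π*x)) (Real.cos_sq_le_one (π*(y-x)))
    have hL3 : (3:ℝ)/2 ≤ Lam (y-x) x := by rw [hL]; linarith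
    have h6 : (3:ℝ)/2 * (3/2) ≤ Lam (y-x) x * Lam (y-x) x :=
      mul_le_mul hL3 hL3 (by norm_num) (by linarith)
    have h7 : (9:ℝ)/4 ≤ Lam (y-x) x ^ 2 := by rw [pow_two]; linarith
    have hx4 : x^4 ≤ 1/16 := by
      have h9 := mul_le_mul hxb hxb (sq_nonneg x) (by norm_num)
      calc x^4 = x^2*x^2 := by ring
        _ ≤ 1/16 := by linarith
    have h8 : (0:ℝ) ≤ Om (y-x) x ^ 2 := sq_nonneg _
    linarith

namespace My
open intervalIntegral
lemma intervalIntegrable_zpow {a b : ℝ} {μ : MeasureTheory.Measure ℝ}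
    [MeasureTheory.IsLocallyFiniteMeasure μ] {n : ℤ}
    (h : 0 ≤ n ∨ (0 : ℝ) ∉ Set.uIcc a b) :
    IntervalIntegrable (fun x : ℝ => x ^ n) μ a b :=
  (continuousOn_id.zpow₀ n fun _ hx => h.symm.imp (ne_of_mem_of_not_mem hx) id).intervalIntegrable
lemma integral_zpow {a b : ℝ} {n : ℤ} (h : 0 ≤ n ∨ n ≠ -1 ∧ (0 : ℝ) ∉ Set.uIcc a b) :
    ∫ x in a..b, x ^ n = (b ^ (n + 1) - a ^ (n + 1)) / (n + 1) := _root_.integral_zpow h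
end My

set_option maxHeartbeats 2000000 in
/-- `W(y) = ∫ dx/(Λ(y-x,x)² + Ω(y-x,x)²) ≤ C|y|^{-3/2}` on `[-1/2,1/2] \ {0}`. -/
theorem stmt_18 :
    ∃ C : ℝ, 0 < C ∧ ∀ y ∈ Set.Icc (-(1:ℝ)/2) (1/2), y ≠ 0 →
      (∫ x in (-(1:ℝ)/2)..(1/2), 1 / (Lam (y - x) x ^ 2 + Om (y - x) x ^ 2))
        ≤ C / |y| ^ ((3:ℝ)/2) := by
  refine ⟨3, by norm_num, ?_⟩
  rintro y ⟨hy1, hy2⟩ hy0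
  have ha : 0 < |y| := abs_pos.mpr hy0
  have ha2 : |y| ≤ 1/2 := abs_le.mpr ⟨by linarith, by linarith⟩
  set a := |y| with hadef
  set s := Real.sqrt a with hsdef
  have hs0 : 0 < s := Real.sqrt_pos.mpr ha
  have hss : s^2 = a := Real.sq_sqrt ha.le
  have hs1 : s ≤ 1 := by nlinarith
  have hrpow : a ^ ((3:ℝ)/2) = a * s := by
    rw [show ((3:ℝ)/2) = 1 + 1/2 by norm_num, Real.rpow_add ha, Real.rpow_one,
      hsdef, Real.sqrt_eq_rpow]
  clear_value s a
  have hy2pos : 0 < y^2 := by rw [← sq_abs]; positivity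
  have hay : y^2 = a^2 := by rw [hadef, sq_abs]
  have hgpos : ∀ x : ℝ, 0 < x^4 + y^2 := fun x => by positivity
  set g : ℝ → ℝ := fun x => 1 / (x^4 + y^2) with hg
  have hgc : Continuous g :=
    Continuous.div continuous_const (by fun_prop) (fun x => (hgpos x).ne')
  have hgnn : ∀ x, 0 ≤ g x := fun x => le_of_lt (by
    simp only [hg]; exact one_div_pos.mpr (hgpos x))
  have hgint : ∀ u v : ℝ, IntervalIntegrable g volume u v :=
    fun u v => hgc.intervalIntegrable u v
  have hDc : Continuous fun x : ℝ => Lam (y - x) x ^ 2 + Om (y - x) x ^ 2 := by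
    unfold Lam Om; fun_prop
  have habs : ∀ x ∈ Set.Icc (-(1:ℝ)/2) (1/2), |x| ≤ 1/2 := by
    intro x hx; exact abs_le.mpr ⟨by linarith [hx.1], by linarith [hx.2]⟩
  have hDpos : ∀ x ∈ Set.Icc (-(1:ℝ)/2) (1/2),
      0 < Lam (y - x) x ^ 2 + Om (y - x) x ^ 2 := by
    intro x hx
    exact lt_of_lt_of_le (hgpos x) (denom_ge (hadef ▸ ha2) (habs x hx))
  have hfint : IntervalIntegrable
      (fun x => 1 / (Lam (y - x) x ^ 2 + Om (y - x) x ^ 2)) volume (-(1:ℝ)/2) (1/2) := by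
    apply ContinuousOn.intervalIntegrable
    apply ContinuousOn.div continuousOn_const hDc.continuousOn
    intro x hx
    rw [Set.uIcc_of_le (by norm_num : (-(1:ℝ)/2) ≤ 1/2)] at hx
    exact (hDpos x hx).ne'
  have step1 : (∫ x in (-(1:ℝ)/2)..(1/2), 1 / (Lam (y - x) x ^ 2 + Om (y - x) x ^ 2))
      ≤ ∫ x in (-(1:ℝ)/2)..(1/2), g x := by
    apply intervalIntegral.integral_mono_on (by norm_num) hfint (hgint _ _)
    intro x hx
    exact one_div_le_one_div_of_le (hgpos x) (denom_ge (hadef ▸ ha2) (habs x hx))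
  have step2 : (∫ x in (-(1:ℝ)/2)..(1/2), g x) ≤ ∫ x in (-1:ℝ)..1, g x := by
    apply intervalIntegral.integral_mono_interval (by norm_num) (by norm_num) (by norm_num)
      (Filter.Eventually.of_forall hgnn) (hgint _ _)
  have hsm : -s ≤ s := by linarith
  have e1 := intervalIntegral.integral_add_adjacent_intervals
    (hgint (-1) (-s)) (hgint (-s) s)
  have e2 := intervalIntegral.integral_add_adjacent_intervals
    (hgint (-1) s) (hgint s 1)
  -- middle bound
  have mid : (∫ x in (-s)..s, g x) ≤ 2*s*(1/y^2) := by
    have h := intervalIntegral.integral_mono_on hsm (hgint _ _)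
      (intervalIntegrable_const (c := 1/y^2))
      (fun x hx => one_div_le_one_div_of_le hy2pos (by nlinarith [sq_nonneg (x^2)]))
    rw [intervalIntegral.integral_const, smul_eq_mul] at h
    calc (∫ x in (-s)..s, g x) ≤ (s - (-s)) * (1/y^2) := h
      _ = 2*s*(1/y^2) := by ring
  -- right tail
  have hz1 : (0:ℝ) ∉ Set.uIcc s 1 := by
    rw [Set.uIcc_of_le hs1]
    intro h; exact absurd h.1 (by linarith)
  have rt : (∫ x in s..1, g x) ≤ ((s^3)⁻¹ - 1)/3 := by
    have hzint : IntervalIntegrable (fun x : ℝ => x^(-4:ℤ)) volume s 1 :=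
      My.intervalIntegrable_zpow (Or.inr hz1)
    have hval : (∫ x in s..1, (x:ℝ)^(-4:ℤ)) = ((s^3)⁻¹ - 1)/3 := by
      rw [My.integral_zpow (Or.inr ⟨by norm_num, hz1⟩)]
      norm_num
      ring
    have h := intervalIntegral.integral_mono_on hs1 (hgint _ _) hzint ?_
    · rw [hval] at h
      exact h
    · intro x hx
      have hx0 : 0 < x := lt_of_lt_of_le hs0 hx.1
      have hzz : (x:ℝ)^(-4:ℤ) = 1/x^4 := by
        rw [zpow_neg, one_div]; norm_cast
      rw [hzz]
      exact one_div_le_one_div_of_le (by positivity) (by nlinarith [sq_nonneg y])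
  -- left tail
  have hz2 : (0:ℝ) ∉ Set.uIcc (-1:ℝ) (-s) := by
    rw [Set.uIcc_of_le (by linarith)]
    intro h; exact absurd h.2 (by linarith)
  have lt' : (∫ x in (-1:ℝ)..(-s), g x) ≤ ((s^3)⁻¹ - 1)/3 := by
    have hzint : IntervalIntegrable (fun x : ℝ => x^(-4:ℤ)) volume (-1) (-s) :=
      My.intervalIntegrable_zpow (Or.inr hz2)
    have hval : (∫ x in (-1:ℝ)..(-s), (x:ℝ)^(-4:ℤ)) = ((s^3)⁻¹ - 1)/3 := by
      rw [My.integral_zpow (Or.inr ⟨by norm_num, hz2⟩)]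
      norm_num
      ring
    have h := intervalIntegral.integral_mono_on (by linarith : (-1:ℝ) ≤ -s) (hgint _ _) hzint ?_
    · rw [hval] at h
      exact h
    · intro x hx
      have hx0 : x < 0 := lt_of_le_of_lt hx.2 (by linarith)
      have hzz : (x:ℝ)^(-4:ℤ) = 1/x^4 := by
        rw [zpow_neg, one_div]; norm_cast
      rw [hzz]
      have hx2p : 0 < x^2 := by nlinarith
      have hx4 : 0 < x^4 := by nlinarith
      exact one_div_le_one_div_of_le hx4 (by nlinarith [sq_nonneg y])
  -- combine
  have htot : (∫ x in (-1:ℝ)..1, g x)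
      ≤ ((s^3)⁻¹ - 1)/3 + 2*s*(1/y^2) + ((s^3)⁻¹ - 1)/3 := by
    have : (∫ x in (-1:ℝ)..1, g x) = (∫ x in (-1:ℝ)..(-s), g x)
        + (∫ x in (-s)..s, g x) + (∫ x in s..1, g x) := by
      rw [e1, e2]
    rw [this]
    linarith
  have harith : ((s^3)⁻¹ - 1)/3 + 2*s*(1/y^2) + ((s^3)⁻¹ - 1)/3 ≤ 3/(a*s) := by
    rw [hay, ← hss]
    have e3 : 2*s*(1/(s^2)^2) = 2*(s^3)⁻¹ := by
      field_simp
    rw [e3, show (s^2*s : ℝ) = s^3 by ring, le_div_iff₀ (pow_pos hs0 3)]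
    have hinv : (s^3)⁻¹ * s^3 = 1 := inv_mul_cancel₀ (ne_of_gt (pow_pos hs0 3))
    nlinarith [hinv, pow_pos hs0 3]
  rw [hrpow]
  calc (∫ x in (-(1:ℝ)/2)..(1/2), 1 / (Lam (y - x) x ^ 2 + Om (y - x) x ^ 2))
      ≤ ∫ x in (-(1:ℝ)/2)..(1/2), g x := step1
    _ ≤ ∫ x in (-1:ℝ)..1, g x := step2
    _ ≤ ((s^3)⁻¹ - 1)/3 + 2*s*(1/y^2) + ((s^3)⁻¹ - 1)/3 := htot
    _ ≤ 3/(a*s) := harith
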